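/- Let g1, g2 > 0 be channel gains, gm = min(g1,g2), gM = max(g1,g2). The function R ↦ E_PNC(R) − E_DNC(R) is strictly decreasing on the interval (0, ∞). -/

import Mathlib

/-- PNC uplink energy usage: `E_PNC(R) = (2^R - 1/2) * (1/g1 + 1/g2)`. -/
noncomputable def EPNC (g1 g2 R : ℝ) : ℝ := ((2 : ℝ) ^ R - 1 / 2) * (1 / g1 + 1 / g2)

/-- SPC-DNC uplink energy usage:
`E_DNC(R) = (2^R - 1)/gm + 2^R (2^R - 1)/gM` with `gm = min g1 g2`, `gM = max g1 g2`. -/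
noncomputable def EDNC (g1 g2 R : ℝ) : ℝ :=
  ((2 : ℝ) ^ R - 1) / min g1 g2 + (2 : ℝ) ^ R * ((2 : ℝ) ^ R - 1) / max g1 g2

theorem stmt_5 (g1 g2 : ℝ) (hg1 : 0 < g1) (hg2 : 0 < g2) :
    StrictAntiOn (fun R : ℝ => EPNC g1 g2 R - EDNC g1 g2 R) (Set.Ioi (0 : ℝ)) := by
  intro a ha b hb hab
  simp only [EPNC, EDNC, Set.mem_Ioi] at *
  have hx : (1 : ℝ) < (2 : ℝ) ^ a := Real.one_lt_rpow_iff_of_pos (by norm_num) |>.2 (Or.inl ⟨by norm_num, ha⟩)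
  have hxy : (2 : ℝ) ^ a < (2 : ℝ) ^ b :=
    (Real.rpow_lt_rpow_left_iff (by norm_num : (1:ℝ) < 2)).2 hab
  set x := (2 : ℝ) ^ a with hxdef
  set y := (2 : ℝ) ^ b with hydef
  rcases le_total g1 g2 with h | h
  · rw [min_eq_left h, max_eq_right h]
    field_simp
    nlinarith [mul_pos (mul_pos (sub_pos.2 hxy) (by nlinarith : (0:ℝ) < x + y - 2))
      hg1]
  · rw [min_eq_right h, max_eq_left h]
    field_simp
    nlinarith [mul_pos (mul_pos (sub_pos.2 hxy) (by nlinarith : (0:ℝ) < x + y - 2))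
      hg2]
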